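/- Let I ⊆ ℝ₊ be a nonempty interval and n ≥ 2. Then ((r,s),(p,q)) ∈ Γ_n(I) if and only if for all u_1,…,u_n > 0 satisfying χ_{r,s}(u_1)+⋯+χ_{r,s}(u_n) = 0 and max(u_1,…,u_n)·inf(I·I^{-1}) ≤ min(u_1,…,u_n), the inequality 0 ≤ χ_{p,q}(u_1)+⋯+χ_{p,q}(u_n) holds. -/

import Mathlib

open Real Finset Pointwise

noncomputable def gini (p q : ℝ) {n : ℕ} (x : Fin n → ℝ) : ℝ :=
  if p = q then Real.exp ((∑ i, x i ^ p * Real.log (x i)) / ∑ i, x i ^ p)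
  else ((∑ i, x i ^ p) / ∑ i, x i ^ q) ^ (1 / (p - q))
noncomputable def chi (p q : ℝ) (u : ℝ) : ℝ :=
  if p = q then u ^ p * Real.log u else (u ^ p - u ^ q) / (p - q)
def Gamma (n : ℕ) (I : Set ℝ) : Set ((ℝ × ℝ) × (ℝ × ℝ)) :=
  {w | ∀ x : Fin n → ℝ, (∀ i, x i ∈ I) → gini w.1.1 w.1.2 x ≤ gini w.2.1 w.2.2 x}

attribute [irreducible] gini chi

variable {n : ℕ}

lemma sum_rpow_pos (hn : 0 < n) (u : Fin n → ℝ) (hu : ∀ i, 0 < u i) (p : ℝ) :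
    0 < ∑ i, u i ^ p := by
  haveI : Nonempty (Fin n) := Fin.pos_iff_nonempty.mp hn
  exact Finset.sum_pos (fun i _ => Real.rpow_pos_of_pos (hu i) p) Finset.univ_nonempty

lemma gini_pos (p q : ℝ) (hn : 0 < n) (u : Fin n → ℝ) (hu : ∀ i, 0 < u i) :
    0 < gini p q u := by
  unfold gini
  split
  · exact Real.exp_pos _
  · exact Real.rpow_pos_of_pos (div_pos (sum_rpow_pos hn u hu p) (sum_rpow_pos hn u hu q)) _

lemma gini_smul (p q c : ℝ) (hc : 0 < c) (hn : 0 < n) (u : Fin n → ℝ) (hu : ∀ i, 0 < u i) :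
    gini p q (fun i => c * u i) = c * gini p q u := by
  have hS : ∀ e : ℝ, (∑ i, (c * u i) ^ e) = c ^ e * ∑ i, u i ^ e := by
    intro e
    rw [Finset.mul_sum]
    exact Finset.sum_congr rfl fun i _ => Real.mul_rpow hc.le (hu i).le
  by_cases h : p = q
  · subst h
    simp only [gini, if_pos rfl]
    have hnum : (∑ i, (c * u i) ^ p * Real.log (c * u i))
        = c ^ p * (Real.log c * ∑ i, u i ^ p + ∑ i, u i ^ p * Real.log (u i)) := by
      rw [mul_add, Finset.mul_sum, Finset.mul_sum, Finset.mul_sum, ← Finset.sum_add_distrib]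
      refine Finset.sum_congr rfl fun i _ => ?_
      rw [Real.mul_rpow hc.le (hu i).le, Real.log_mul hc.ne' (hu i).ne']
      ring
    rw [hnum, hS p]
    have hSp : (0:ℝ) < ∑ i, u i ^ p := sum_rpow_pos hn u hu p
    have hcp : (0:ℝ) < c ^ p := Real.rpow_pos_of_pos hc p
    rw [mul_div_mul_left _ _ hcp.ne', add_div, mul_div_cancel_right₀ _ hSp.ne',
      Real.exp_add, Real.exp_log hc]
    simp
  · simp only [gini, if_neg h, hS p, hS q]
    have hSp : (0:ℝ) < ∑ i, u i ^ p := sum_rpow_pos hn u hu p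
    have hSq : (0:ℝ) < ∑ i, u i ^ q := sum_rpow_pos hn u hu q
    have hcq : (0:ℝ) < c ^ q := Real.rpow_pos_of_pos hc q
    have : c ^ p * (∑ i, u i ^ p) / (c ^ q * ∑ i, u i ^ q)
        = c ^ (p - q) * ((∑ i, u i ^ p) / ∑ i, u i ^ q) := by
      rw [Real.rpow_sub hc]; field_simp
    rw [this, Real.mul_rpow (Real.rpow_pos_of_pos hc _).le (div_pos hSp hSq).le,
      ← Real.rpow_mul hc.le, mul_one_div, div_self (sub_ne_zero.mpr h), Real.rpow_one]





lemma chi_one (p q : ℝ) : chi p q 1 = 0 := by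
  unfold chi; split <;> simp

lemma chi_eq_zero (r s c : ℝ) (hc : 0 < c) (h : chi r s c = 0) : c = 1 := by
  have hlog : Real.log c = 0 := by
    unfold chi at h
    split at h
    · rcases mul_eq_zero.mp h with h' | h'
      · exact absurd h' (Real.rpow_pos_of_pos hc _).ne'
      · exact h'
    · next hrs =>
      have : c ^ r = c ^ s := by
        have := (div_eq_zero_iff.mp h).resolve_right (sub_ne_zero.mpr hrs)
        linarith
      have h2 : r * Real.log c = s * Real.log c := by
        rw [← Real.log_rpow hc, ← Real.log_rpow hc, this]
      rcases mul_eq_mul_right_iff.mp h2 with h' | h'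
      · exact absurd h' hrs
      · exact h'
  have := Real.log_eq_zero.mp hlog
  rcases this with h' | h' | h' <;> [exact absurd h' hc.ne'; exact h'; linarith]

lemma sum_chi_eq (p q : ℝ) (u : Fin n → ℝ) (h : p ≠ q) :
    ∑ i, chi p q (u i) = ((∑ i, u i ^ p) - ∑ i, u i ^ q) / (p - q) := by
  simp only [chi, if_neg h]
  rw [← Finset.sum_div, Finset.sum_sub_distrib]

lemma one_le_gini_iff (p q : ℝ) (hn : 0 < n) (u : Fin n → ℝ) (hu : ∀ i, 0 < u i) :
    1 ≤ gini p q u ↔ 0 ≤ ∑ i, chi p q (u i) := by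
  by_cases h : p = q
  · subst h
    simp only [gini, chi, if_pos rfl, if_true]
    rw [Real.one_le_exp_iff]
    rw [le_div_iff₀ (sum_rpow_pos hn u hu p), zero_mul]
  · have hSp : (0:ℝ) < ∑ i, u i ^ p := sum_rpow_pos hn u hu p
    have hSq : (0:ℝ) < ∑ i, u i ^ q := sum_rpow_pos hn u hu q
    have hA : (0:ℝ) < (∑ i, u i ^ p) / ∑ i, u i ^ q := div_pos hSp hSq
    rw [sum_chi_eq p q u h]
    simp only [gini, if_neg h]
    rw [← Real.log_nonneg_iff (Real.rpow_pos_of_pos hA _), Real.log_rpow hA,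
      Real.log_div hSp.ne' hSq.ne', mul_comm, ← div_eq_mul_one_div]
    rcases (sub_ne_zero.mpr h).lt_or_gt with hd | hd
    · rw [div_nonneg_iff, div_nonneg_iff]
      constructor
      · rintro (⟨h1, h2⟩ | ⟨h1, h2⟩)
        · linarith
        · right
          refine ⟨by simp only [sub_nonpos] at h1 ⊢; exact (Real.log_le_log_iff hSp hSq).mp h1, hd.le⟩
      · rintro (⟨h1, h2⟩ | ⟨h1, h2⟩)
        · linarith
        · right
          refine ⟨by simp only [sub_nonpos] at h1 ⊢; exact (Real.log_le_log_iff hSp hSq).mpr h1, hd.le⟩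
    · rw [div_nonneg_iff, div_nonneg_iff]
      constructor
      · rintro (⟨h1, h2⟩ | ⟨h1, h2⟩)
        · left
          refine ⟨by simp only [sub_nonneg] at h1 ⊢; exact (Real.log_le_log_iff hSq hSp).mp h1, hd.le⟩
        · linarith
      · rintro (⟨h1, h2⟩ | ⟨h1, h2⟩)
        · left
          refine ⟨by simp only [sub_nonneg] at h1 ⊢; exact (Real.log_le_log_iff hSq hSp).mpr h1, hd.le⟩
        · linarith

lemma gini_eq_one_iff (p q : ℝ) (hn : 0 < n) (u : Fin n → ℝ) (hu : ∀ i, 0 < u i) :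
    gini p q u = 1 ↔ ∑ i, chi p q (u i) = 0 := by
  by_cases h : p = q
  · subst h
    simp only [gini, chi, if_pos rfl, if_true]
    rw [Real.exp_eq_one_iff, div_eq_zero_iff]
    have := (sum_rpow_pos hn u hu p).ne'
    tauto
  · have hSp : (0:ℝ) < ∑ i, u i ^ p := sum_rpow_pos hn u hu p
    have hSq : (0:ℝ) < ∑ i, u i ^ q := sum_rpow_pos hn u hu q
    have hA : (0:ℝ) < (∑ i, u i ^ p) / ∑ i, u i ^ q := div_pos hSp hSq
    rw [sum_chi_eq p q u h]
    simp only [gini, if_neg h]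
    have hd : p - q ≠ 0 := sub_ne_zero.mpr h
    rw [div_eq_zero_iff]
    constructor
    · intro h1
      left
      have hlog : Real.log (((∑ i, u i ^ p) / ∑ i, u i ^ q) ^ (1 / (p-q))) = 0 := by
        rw [h1, Real.log_one]
      rw [Real.log_rpow hA, mul_eq_zero] at hlog
      rcases hlog with h' | h'
      · exact absurd h' (by simp [hd])
      · have : (∑ i, u i ^ p) / ∑ i, u i ^ q = 1 := by
          rcases Real.log_eq_zero.mp h' with h'' | h'' | h'' <;> [exact absurd h'' hA.ne'; exact h''; linarith]
        have := (div_eq_one_iff_eq hSq.ne').mp this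
        linarith
    · rintro (h1 | h1)
      · have : (∑ i, u i ^ p) = ∑ i, u i ^ q := by linarith
        rw [this, div_self hSq.ne', Real.one_rpow]
      · exact absurd h1 hd



lemma continuous_const_rpow (b : ℝ) (hb : 0 < b) : Continuous fun t : ℝ => b ^ t := by
  have : (fun t : ℝ => b ^ t) = fun t => Real.exp (Real.log b * t) :=
    funext fun t => Real.rpow_def_of_pos hb t
  rw [this]; fun_prop

lemma continuousAt_chi (p q y : ℝ) (hy : 0 < y) : ContinuousAt (fun z => chi p q z) y := by
  unfold chi
  by_cases h : p = q
  · simp only [if_pos h]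
    exact ((Real.continuousAt_rpow_const y p (Or.inl hy.ne')).mul
      (Real.continuousAt_log hy.ne'))
  · simp only [if_neg h]
    exact (((Real.continuousAt_rpow_const y p (Or.inl hy.ne')).sub
      (Real.continuousAt_rpow_const y q (Or.inl hy.ne'))).div_const _)

lemma continuousAt_gini_pow (r s : ℝ) (hn : 0 < n) (u : Fin n → ℝ) (hu : ∀ i, 0 < u i) :
    ContinuousAt (fun t : ℝ => gini r s (fun j => u j ^ t)) 1 := by
  have hb : ∀ (e : ℝ), ContinuousAt (fun t : ℝ => ∑ i, (u i ^ t) ^ e) 1 := by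
    intro e
    apply tendsto_finset_sum
    intro i _
    exact (Real.continuousAt_rpow_const _ e (Or.inl (Real.rpow_pos_of_pos (hu i) 1).ne')).comp
      (continuous_const_rpow (u i) (hu i)).continuousAt
  have hpos : ∀ (e : ℝ) (t : ℝ), 0 < ∑ i, (u i ^ t) ^ e := fun e t =>
    sum_rpow_pos hn _ (fun i => Real.rpow_pos_of_pos (hu i) t) e
  unfold gini
  by_cases h : r = s
  · simp only [if_pos h]
    apply Real.continuous_exp.continuousAt.comp
    apply ContinuousAt.div
    · apply tendsto_finset_sum
      intro i _
      have h1 : ContinuousAt (fun t : ℝ => (u i ^ t) ^ r) 1 :=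
        (Real.continuousAt_rpow_const _ r (Or.inl (Real.rpow_pos_of_pos (hu i) 1).ne')).comp
          (continuous_const_rpow (u i) (hu i)).continuousAt
      have h2 : ContinuousAt (fun t : ℝ => Real.log (u i ^ t)) 1 :=
        (Real.continuousAt_log (Real.rpow_pos_of_pos (hu i) 1).ne').comp
          (continuous_const_rpow (u i) (hu i)).continuousAt
      exact h1.mul h2
    · exact hb r
    · exact (hpos r 1).ne'
  · simp only [if_neg h]
    have hA : ContinuousAt (fun t : ℝ => (∑ i, (u i ^ t) ^ r) / ∑ i, (u i ^ t) ^ s) 1 :=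
      (hb r).div (hb s) (hpos s 1).ne'
    exact hA.rpow_const (Or.inl (div_pos (hpos r 1) (hpos s 1)).ne')

set_option maxHeartbeats 1000000 in
lemma continuousAt_phi (r s p q : ℝ) (hn : 0 < n) (u : Fin n → ℝ) (hu : ∀ i, 0 < u i) :
    ContinuousAt (fun t : ℝ =>
      ∑ i, chi p q ((gini r s (fun j => u j ^ t))⁻¹ * u i ^ t)) 1 := by
  have hg := continuousAt_gini_pow r s hn u hu
  have hgpos : ∀ t : ℝ, 0 < gini r s (fun j => u j ^ t) := fun t =>
    gini_pos r s hn _ (fun i => Real.rpow_pos_of_pos (hu i) t)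
  have H : Filter.Tendsto (fun t : ℝ =>
      ∑ i, chi p q ((gini r s (fun j => u j ^ t))⁻¹ * u i ^ t)) (nhds 1)
      (nhds (∑ i, chi p q ((gini r s (fun j => u j ^ (1:ℝ)))⁻¹ * u i ^ (1:ℝ)))) := by
    apply tendsto_finset_sum
    intro i _
    have harg : ContinuousAt (fun t : ℝ => (gini r s (fun j => u j ^ t))⁻¹ * u i ^ t) 1 :=
      (hg.inv₀ (hgpos 1).ne').mul (continuous_const_rpow (u i) (hu i)).continuousAt
    have hc : ContinuousAt ((fun z => chi p q z) ∘
        (fun t : ℝ => (gini r s (fun j => u j ^ t))⁻¹ * u i ^ t)) 1 :=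
      ContinuousAt.comp (continuousAt_chi p q _
        (mul_pos (inv_pos.mpr (hgpos 1)) (Real.rpow_pos_of_pos (hu i) 1))) harg
    exact hc
  exact H

lemma exists_scale (I : Set ℝ) (hIpos : I ⊆ Set.Ioi 0) (hIint : I.OrdConnected)
    (X Y : ℝ) (hX : X ∈ I) (hY : Y ∈ I) (v : Fin n → ℝ)
    (m M : ℝ) (hm : ∀ i, m ≤ v i) (hM : ∀ i, v i ≤ M) (hmpos : 0 < m) (hMpos : 0 < M)
    (h : X * M < Y * m) : ∃ d : ℝ, 0 < d ∧ ∀ i, d * v i ∈ I := by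
  have hXpos : 0 < X := hIpos hX
  have hYpos : 0 < Y := hIpos hY
  have hlt : X / m < Y / M := (div_lt_div_iff₀ hmpos hMpos).mpr h
  refine ⟨(X / m + Y / M) / 2, by positivity, fun i => ?_⟩
  have hd1 : X / m < (X / m + Y / M) / 2 := by linarith
  have hd2 : (X / m + Y / M) / 2 < Y / M := by linarith
  have hXd : X < (X / m + Y / M) / 2 * m := (div_lt_iff₀ hmpos).mp hd1
  have hYd : (X / m + Y / M) / 2 * M < Y := (lt_div_iff₀ hMpos).mp hd2
  have hdpos : 0 < (X / m + Y / M) / 2 := by positivity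
  apply hIint.out hX hY
  constructor
  · calc X ≤ (X / m + Y / M) / 2 * m := hXd.le
      _ ≤ (X / m + Y / M) / 2 * v i := by
          exact mul_le_mul_of_nonneg_left (hm i) hdpos.le
  · calc (X / m + Y / M) / 2 * v i ≤ (X / m + Y / M) / 2 * M :=
          mul_le_mul_of_nonneg_left (hM i) hdpos.le
      _ ≤ Y := hYd.le


lemma pos_of_mem_mul_inv {I : Set ℝ} (hIpos : I ⊆ Set.Ioi 0) {z : ℝ} (hz : z ∈ I * I⁻¹) :
    0 < z := by
  obtain ⟨X, hX, y, hy, rfl⟩ := Set.mem_mul.mp hz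
  have h1 : 0 < X := hIpos hX
  have h2 : 0 < y⁻¹ := hIpos (Set.mem_inv.mp hy)
  exact mul_pos h1 (inv_pos.mp h2)

theorem Gamma_characterization (I : Set ℝ) (hI : I.Nonempty) (hIpos : I ⊆ Set.Ioi 0)
    (hIint : I.OrdConnected) (n : ℕ) (hn : 2 ≤ n) (r s p q : ℝ) :
    ((r, s), (p, q)) ∈ Gamma n I ↔
      ∀ u : Fin n → ℝ, (∀ i, 0 < u i) →
        (∑ i, chi r s (u i) = 0) →
        (Finset.univ.sup' (Finset.univ_nonempty_iff.mpr
            (Fin.pos_iff_nonempty.mp (by omega))) u) * sInf (I * I⁻¹) ≤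
          Finset.univ.inf' (Finset.univ_nonempty_iff.mpr
            (Fin.pos_iff_nonempty.mp (by omega))) u →
        0 ≤ ∑ i, chi p q (u i) := by
  have hn0 : 0 < n := by omega
  haveI : Nonempty (Fin n) := Fin.pos_iff_nonempty.mp hn0
  have hne : (Finset.univ : Finset (Fin n)).Nonempty := Finset.univ_nonempty
  have hBdd : BddBelow (I * I⁻¹) := ⟨0, fun z hz => (pos_of_mem_mul_inv hIpos hz).le⟩
  have hIImem : ∀ a ∈ I, ∀ b ∈ I, a * b⁻¹ ∈ I * I⁻¹ := fun a ha b hb =>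
    Set.mul_mem_mul ha (Set.mem_inv.mpr (by rwa [inv_inv]))
  constructor
  · -- forward direction
    intro h u hu hsum hratio0
    have hratio : Finset.univ.sup' hne u * sInf (I * I⁻¹) ≤ Finset.univ.inf' hne u := hratio0
    set m := Finset.univ.inf' hne u with hm_def
    set M := Finset.univ.sup' hne u with hM_def
    have hm_le : ∀ i, m ≤ u i := fun i => Finset.inf'_le u (Finset.mem_univ i)
    have hM_ge : ∀ i, u i ≤ M := fun i => Finset.le_sup' u (Finset.mem_univ i)
    obtain ⟨im, -, him⟩ := Finset.exists_mem_eq_inf' hne u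
    obtain ⟨iM, -, hiM⟩ := Finset.exists_mem_eq_sup' hne u
    have hmpos : 0 < m := by rw [hm_def, him]; exact hu im
    have hMpos : 0 < M := by rw [hM_def, hiM]; exact hu iM
    by_cases hEq : m = M
    · have hall : ∀ i, u i = m := fun i => le_antisymm (hEq ▸ hM_ge i) (hm_le i)
      have h1 : m = 1 := by
        apply chi_eq_zero r s m hmpos
        have hsc : ∑ i, chi r s (u i) = (n : ℝ) * chi r s m := by
          rw [Finset.sum_congr rfl fun i _ => by rw [hall i]]
          simp [Finset.sum_const, Finset.card_univ]
        rw [hsc] at hsum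
        have hn' : (n:ℝ) ≠ 0 := Nat.cast_ne_zero.mpr (by omega)
        exact (mul_eq_zero.mp hsum).resolve_left hn'
      have : ∀ i, chi p q (u i) = 0 := fun i => by rw [hall i, h1, chi_one]
      simp [this]
    · have hmM : m < M := lt_of_le_of_ne ((hm_le iM).trans (hM_ge iM)) hEq
      set g : ℝ → ℝ := fun t => gini r s (fun j => u j ^ t) with hg_def
      have hgpos : ∀ t, 0 < g t := fun t =>
        gini_pos r s hn0 _ (fun i => Real.rpow_pos_of_pos (hu i) t)
      have hg1 : g 1 = 1 := by
        have hfun : (fun j => u j ^ (1:ℝ)) = u := funext fun j => Real.rpow_one _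
        rw [hg_def]
        simp only [hfun]
        exact (gini_eq_one_iff r s hn0 u hu).mpr hsum
      have hsInf_le : sInf (I * I⁻¹) ≤ m / M := by
        rw [le_div_iff₀ hMpos]; linarith
      have key : ∀ t ∈ Set.Ioo (0:ℝ) 1, 0 ≤ ∑ i, chi p q ((g t)⁻¹ * u i ^ t) := by
        intro t ht
        have hvpos : ∀ i, 0 < u i ^ t := fun i => Real.rpow_pos_of_pos (hu i) t
        have hstep : sInf (I * I⁻¹) < (m / M) ^ t := by
          refine lt_of_le_of_lt hsInf_le ?_
          have := Real.rpow_lt_rpow_of_exponent_gt (div_pos hmpos hMpos)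
            ((div_lt_one hMpos).mpr hmM) ht.2
          rwa [Real.rpow_one] at this
        obtain ⟨x0, hx0⟩ := hI
        obtain ⟨z, hz, hzlt⟩ := exists_lt_of_csInf_lt ⟨x0 * x0⁻¹, hIImem x0 hx0 x0 hx0⟩ hstep
        obtain ⟨X, hX, y, hy, rfl⟩ := Set.mem_mul.mp hz
        have hYI : y⁻¹ ∈ I := Set.mem_inv.mp hy
        have hYpos : 0 < y⁻¹ := hIpos hYI
        have hypos : 0 < y := inv_pos.mp hYpos
        have hMt : 0 < M ^ t := Real.rpow_pos_of_pos hMpos t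
        have hzlt' : X * y * M ^ t < m ^ t := by
          rw [Real.div_rpow hmpos.le hMpos.le] at hzlt
          exact (lt_div_iff₀ hMt).mp hzlt
        have hXY : X * M ^ t < y⁻¹ * m ^ t := by
          rw [inv_mul_eq_div, lt_div_iff₀ hypos]
          calc X * M ^ t * y = X * y * M ^ t := by ring
            _ < m ^ t := hzlt'
        obtain ⟨d, hd, hdI⟩ := exists_scale I hIpos hIint X y⁻¹ hX hYI
          (fun i => u i ^ t) (m ^ t) (M ^ t)
          (fun i => Real.rpow_le_rpow hmpos.le (hm_le i) ht.1.le)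
          (fun i => Real.rpow_le_rpow (hu i).le (hM_ge i) ht.1.le)
          (Real.rpow_pos_of_pos hmpos t) hMt hXY
        have hcomp := h (fun i => d * u i ^ t) hdI
        rw [gini_smul r s d hd hn0 _ hvpos, gini_smul p q d hd hn0 _ hvpos] at hcomp
        have hle : g t ≤ gini p q (fun i => u i ^ t) :=
          le_of_mul_le_mul_left hcomp hd
        have hone : 1 ≤ gini p q (fun i => (g t)⁻¹ * u i ^ t) := by
          rw [gini_smul p q _ (inv_pos.mpr (hgpos t)) hn0 _ hvpos]
          have h5 := mul_le_mul_of_nonneg_left hle (inv_pos.mpr (hgpos t)).le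
          rwa [inv_mul_cancel₀ (hgpos t).ne'] at h5
        exact (one_le_gini_iff p q hn0 _
          (fun i => mul_pos (inv_pos.mpr (hgpos t)) (hvpos i))).mp hone
      have hcont : ContinuousAt (fun t : ℝ => ∑ i, chi p q ((g t)⁻¹ * u i ^ t)) 1 :=
        continuousAt_phi r s p q hn0 u hu
      have htend : Filter.Tendsto (fun t : ℝ => ∑ i, chi p q ((g t)⁻¹ * u i ^ t))
          (nhdsWithin 1 (Set.Iio 1)) (nhds (∑ i, chi p q ((g 1)⁻¹ * u i ^ (1:ℝ)))) :=
        hcont.tendsto.mono_left nhdsWithin_le_nhds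
      have hfinal : 0 ≤ ∑ i, chi p q ((g 1)⁻¹ * u i ^ (1:ℝ)) := by
        refine ge_of_tendsto htend ?_
        filter_upwards [Ioo_mem_nhdsLT_of_mem
          (show (1:ℝ) ∈ Set.Ioc 0 1 by constructor <;> norm_num)] with t ht using key t ht
      have hsimp : ∀ i, (g 1)⁻¹ * u i ^ (1:ℝ) = u i := fun i => by
        rw [hg1, Real.rpow_one, inv_one, one_mul]
      calc (0:ℝ) ≤ ∑ i, chi p q ((g 1)⁻¹ * u i ^ (1:ℝ)) := hfinal
        _ = ∑ i, chi p q (u i) := Finset.sum_congr rfl fun i _ => by rw [hsimp i]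
  · -- backward direction
    intro H x hx
    have hxpos : ∀ i, 0 < x i := fun i => hIpos (hx i)
    have ht : 0 < gini r s x := gini_pos r s hn0 x hxpos
    set u : Fin n → ℝ := fun i => (gini r s x)⁻¹ * x i with hu_def
    have hupos : ∀ i, 0 < u i := fun i => mul_pos (inv_pos.mpr ht) (hxpos i)
    have hsum : ∑ i, chi r s (u i) = 0 := by
      apply (gini_eq_one_iff r s hn0 u hupos).mp
      rw [hu_def, gini_smul r s _ (inv_pos.mpr ht) hn0 x hxpos]
      exact inv_mul_cancel₀ ht.ne'
    have hratio : Finset.univ.sup' hne u * sInf (I * I⁻¹) ≤ Finset.univ.inf' hne u := by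
      obtain ⟨im, -, him⟩ := Finset.exists_mem_eq_inf' hne u
      obtain ⟨iM, -, hiM⟩ := Finset.exists_mem_eq_sup' hne u
      rw [him, hiM]
      have h1 : sInf (I * I⁻¹) ≤ x im * (x iM)⁻¹ :=
        csInf_le hBdd (hIImem _ (hx im) _ (hx iM))
      have h2 : u iM * (x im * (x iM)⁻¹) = u im := by
        have h3 : x iM ≠ 0 := (hxpos iM).ne'
        have h4 : gini r s x ≠ 0 := ht.ne'
        rw [hu_def]
        field_simp
      calc u iM * sInf (I * I⁻¹) ≤ u iM * (x im * (x iM)⁻¹) :=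
            mul_le_mul_of_nonneg_left h1 (hupos iM).le
        _ = u im := h2
    have h0 : 0 ≤ ∑ i, chi p q (u i) := H u hupos hsum hratio
    have hge : 1 ≤ gini p q u := (one_le_gini_iff p q hn0 u hupos).mpr h0
    have hxu : (fun i => gini r s x * u i) = x := funext fun i => by
      have h4 : gini r s x ≠ 0 := ht.ne'
      rw [hu_def]
      field_simp
    calc gini r s x = gini r s x * 1 := (mul_one _).symm
      _ ≤ gini r s x * gini p q u := mul_le_mul_of_nonneg_left hge ht.le
      _ = gini p q (fun i => gini r s x * u i) := (gini_smul p q _ ht hn0 u hupos).symm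
      _ = gini p q x := by rw [hxu]
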